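/- Non-negativity of F-information: let F be a predictive family satisfying optional ignorance (for every f ∈ F and every P in the range of f there exists f' ∈ F with f'[x] = P for all x ∈ 𝒳 and f'[∅] = P). Then for any random variables X, Y, I_F(X → Y) = H_F(Y) − H_F(Y|X) ≥ 0. -/
import Mathlib


open MeasureTheory

/-- Non-negativity of F-information: if the predictive family `F`
satisfies optional ignorance, then `I_F(X → Y) = H_F(Y) - H_F(Y|X) ≥ 0`. -/
theorem information_nonneg
    {Ω 𝓧 𝓨 : Type*} [MeasureSpace Ω] [IsProbabilityMeasure (volume : Measure Ω)]
    (X : Ω → 𝓧) (Y : Ω → 𝓨)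
    (F : Set (Option 𝓧 → 𝓨 → ℝ)) (hF : F.Nonempty)
    (hOI : ∀ f ∈ F, ∀ o : Option 𝓧, ∃ f' ∈ F,
      (∀ x : 𝓧, f' (some x) = f o) ∧ f' none = f o)
    (hbdd : BddBelow ((fun f => ∫ ω, -Real.log (f (some (X ω)) (Y ω))) '' F)) :
    0 ≤ sInf ((fun f => ∫ ω, -Real.log (f none (Y ω))) '' F)
        - sInf ((fun f => ∫ ω, -Real.log (f (some (X ω)) (Y ω))) '' F) := by
  rw [sub_nonneg]
  apply le_csInf (hF.image _)
  rintro a ⟨f, hf, rfl⟩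
  obtain ⟨f', hf', hx, -⟩ := hOI f hf none
  have : (fun ω => -Real.log (f' (some (X ω)) (Y ω)))
      = fun ω => -Real.log (f none (Y ω)) := by
    funext ω; rw [hx]
  calc sInf ((fun f => ∫ ω, -Real.log (f (some (X ω)) (Y ω))) '' F)
      ≤ ∫ ω, -Real.log (f' (some (X ω)) (Y ω)) := csInf_le hbdd ⟨f', hf', rfl⟩
    _ = ∫ ω, -Real.log (f none (Y ω)) := by rw [this]
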